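/- Let N > 0 and α > 0, and let φ : [0,1]² × ℝ → ℝ be such that φ(x,·) is three times continuously differentiable for each x, with C_k = 2π sup_{x ∈ [0,1]²} sup_θ |∂_θ^k φ(x,θ)| finite for k = 0,1,2,3; set D₂ = C₀ + C₂ and D₃ = C₁ + C₃, and assume D₂ > 0. If 0 < ε ≤ 1, N ≥ α⁶ D₃² / (18 ε²), and α is admissible in the sense that α ≤ √(√2/(e D₂)), then the ε-separation rank of the kernel e^{2πi Φ_ℓ(x,(r,θ))} on [0,1]² × W_N is at most 1 + log(4 ε⁻¹) / log( 2√2 / (e α² D₂) ). -/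

import Mathlib

open scoped BigOperators

open Real intervalIntegral

lemma lemA (f : ℝ → ℝ) (hf : ContDiff ℝ 3 f) (L : ℝ)
    (hL : ∀ s, |deriv f s + deriv (deriv (deriv f)) s| ≤ L) (θ : ℝ) :
    |f θ - Real.cos θ * f 0 - Real.sin θ * deriv f 0
      - (1 - Real.cos θ) * (f 0 + deriv (deriv f) 0)| ≤ L * |θ| ^ 3 / 6 := by
  have h1 : ContDiff ℝ 2 (deriv f) := by
    have := hf.iterate_deriv' 2 1
    simpa using this
  have h2 : ContDiff ℝ 1 (deriv (deriv f)) := by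
    have := hf.iterate_deriv' 1 2
    simpa [Function.iterate_succ, Function.comp] using this
  have hd0 : Differentiable ℝ f := hf.differentiable (by norm_num)
  have hd1 : Differentiable ℝ (deriv f) := h1.differentiable (by norm_num)
  have hd2 : Differentiable ℝ (deriv (deriv f)) := h2.differentiable (by norm_num)
  set F : ℝ → ℝ := fun t => f t + deriv (deriv f) t with hF
  have hFd : ∀ s, HasDerivAt F (deriv f s + deriv (deriv (deriv f)) s) s := fun s =>
    ((hd0 s).hasDerivAt).add ((hd2 s).hasDerivAt)
  have hFcont : Continuous F := hd0.continuous.add hd2.continuous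
  have hLnn : 0 ≤ L := le_trans (abs_nonneg _) (hL 0)
  -- MVT bound
  have hLip : ∀ s, |F s - F 0| ≤ L * |s| := by
    intro s
    have := Convex.norm_image_sub_le_of_norm_deriv_le (f := F) (s := (Set.univ : Set ℝ))
      (fun t _ => (hFd t).differentiableAt)
      (fun t _ => by rw [(hFd t).deriv]; exact hL t)
      convex_univ (Set.mem_univ 0) (Set.mem_univ s)
    simpa [Real.norm_eq_abs] using this
  -- integral identity 1
  have hsinD : ∀ t : ℝ, HasDerivAt (fun u : ℝ => Real.sin (θ - u)) (-Real.cos (θ - t)) t := by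
    intro t
    have := (Real.hasDerivAt_sin (θ - t)).comp t ((hasDerivAt_id t).const_sub θ)
    simpa [Function.comp_def] using this
  have hcosD : ∀ t : ℝ, HasDerivAt (fun u : ℝ => Real.cos (θ - u)) (Real.sin (θ - t)) t := by
    intro t
    have := (Real.hasDerivAt_cos (θ - t)).comp t ((hasDerivAt_id t).const_sub θ)
    simpa [Function.comp_def] using this
  have hint1 : IntervalIntegrable (fun s => Real.sin (θ - s) * F s) MeasureTheory.volume 0 θ :=
    (Continuous.mul (Real.continuous_sin.comp (continuous_const.sub continuous_id)) hFcont).intervalIntegrable 0 θ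
  have hI1 : ∫ s in (0:ℝ)..θ, Real.sin (θ - s) * F s
      = f θ - Real.cos θ * f 0 - Real.sin θ * deriv f 0 := by
    have key : ∀ t ∈ Set.uIcc (0:ℝ) θ,
        HasDerivAt (fun u => Real.sin (θ - u) * deriv f u + Real.cos (θ - u) * f u)
          (Real.sin (θ - t) * F t) t := by
      intro t _
      have hA : HasDerivAt (fun u => Real.sin (θ - u) * deriv f u)
          (-Real.cos (θ - t) * deriv f t + Real.sin (θ - t) * deriv (deriv f) t) t :=
        (hsinD t).mul ((hd1 t).hasDerivAt)
      have hB : HasDerivAt (fun u => Real.cos (θ - u) * f u)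
          (Real.sin (θ - t) * f t + Real.cos (θ - t) * deriv f t) t :=
        (hcosD t).mul ((hd0 t).hasDerivAt)
      have := hA.add hB
      refine this.congr_deriv ?_
      show _ = Real.sin (θ - t) * (f t + deriv (deriv f) t)
      ring
    have := integral_eq_sub_of_hasDerivAt key hint1
    rw [this]
    simp
    ring
  -- integral identity 2
  have hI2 : ∫ s in (0:ℝ)..θ, Real.sin (θ - s) * F 0 = (1 - Real.cos θ) * F 0 := by
    have key : ∀ t ∈ Set.uIcc (0:ℝ) θ,
        HasDerivAt (fun u => Real.cos (θ - u) * F 0) (Real.sin (θ - t) * F 0) t := by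
      intro t _
      exact (hcosD t).mul_const (F 0)
    have := integral_eq_sub_of_hasDerivAt key
      ((Continuous.mul (Real.continuous_sin.comp (continuous_const.sub continuous_id)) continuous_const).intervalIntegrable 0 θ)
    rw [this]
    simp
    ring
  have hint2 : IntervalIntegrable (fun s => Real.sin (θ - s) * F 0) MeasureTheory.volume 0 θ :=
    (Continuous.mul (Real.continuous_sin.comp (continuous_const.sub continuous_id)) continuous_const).intervalIntegrable 0 θ
  have hdiff : f θ - Real.cos θ * f 0 - Real.sin θ * deriv f 0 - (1 - Real.cos θ) * (f 0 + deriv (deriv f) 0)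
      = ∫ s in (0:ℝ)..θ, Real.sin (θ - s) * (F s - F 0) := by
    have : (∫ s in (0:ℝ)..θ, Real.sin (θ - s) * (F s - F 0))
        = (∫ s in (0:ℝ)..θ, Real.sin (θ - s) * F s) - ∫ s in (0:ℝ)..θ, Real.sin (θ - s) * F 0 := by
      rw [← integral_sub hint1 hint2]
      congr 1
      ext s
      ring
    rw [this, hI1, hI2]
  rw [hdiff]
  -- bound
  have hb : ∀ᵐ t ∂(MeasureTheory.volume.restrict (Set.uIoc (0:ℝ) θ)),
      ‖Real.sin (θ - t) * (F t - F 0)‖ ≤ L * (θ * t - t ^ 2) := by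
    refine MeasureTheory.ae_restrict_of_forall_mem measurableSet_uIoc ?_
    intro t ht
    have h1 : |Real.sin (θ - t)| ≤ |θ - t| := Real.abs_sin_le_abs
    have h2 : |F t - F 0| ≤ L * |t| := hLip t
    have h3 : |θ - t| * |t| = θ * t - t ^ 2 := by
      rcases Set.mem_uIoc.mp ht with h | h
      · rw [abs_of_nonneg (by linarith [h.1, h.2] : (0:ℝ) ≤ θ - t),
          abs_of_pos h.1]; ring
      · rw [abs_of_nonpos (by linarith [h.1, h.2] : θ - t ≤ 0), abs_of_nonpos h.2]
        ring
    calc ‖Real.sin (θ - t) * (F t - F 0)‖ = |Real.sin (θ - t)| * |F t - F 0| := by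
          rw [Real.norm_eq_abs, abs_mul]
      _ ≤ |θ - t| * (L * |t|) := mul_le_mul h1 h2 (abs_nonneg _) (abs_nonneg _)
      _ = L * (θ * t - t ^ 2) := by rw [← h3]; ring
  have hbound_int : IntervalIntegrable (fun t => L * (θ * t - t ^ 2)) MeasureTheory.volume 0 θ :=
    (Continuous.mul continuous_const ((continuous_const.mul continuous_id).sub (continuous_pow 2))).intervalIntegrable 0 θ
  have := norm_integral_le_abs_of_norm_le hb hbound_int
  have hval : (∫ t in (0:ℝ)..θ, L * (θ * t - t ^ 2)) = L * θ ^ 3 / 6 := by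
    rw [integral_const_mul]
    have : (∫ t in (0:ℝ)..θ, (θ * t - t ^ 2))
        = θ * ((θ ^ 2 - 0 ^ 2) / 2) - (θ ^ 3 - 0 ^ 3) / 3 := by
      have ic1 : IntervalIntegrable (fun t : ℝ => θ * t) MeasureTheory.volume 0 θ := by
        apply Continuous.intervalIntegrable; fun_prop
      have ic2 : IntervalIntegrable (fun t : ℝ => t ^ 2) MeasureTheory.volume 0 θ := by
        apply Continuous.intervalIntegrable; fun_prop
      rw [integral_sub ic1 ic2, integral_const_mul, integral_id, integral_pow]
      norm_num
    rw [this]; ring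
  rw [hval] at this
  calc |∫ s in (0:ℝ)..θ, Real.sin (θ - s) * (F s - F 0)| ≤ |L * θ ^ 3 / 6| := by
        simpa [Real.norm_eq_abs] using this
    _ = L * |θ| ^ 3 / 6 := by
        rw [abs_div, abs_mul, abs_of_nonneg hLnn, abs_pow]
        norm_num


lemma abs_exp_I_sub_one_le (t : ℝ) : ‖Complex.exp ((t : ℂ) * Complex.I) - 1‖ ≤ |t| := by
  have h : Complex.exp ((t : ℂ) * Complex.I) - 1
      = Complex.mk (Real.cos t - 1) (Real.sin t) := by
    apply Complex.ext <;>
      simp [Complex.exp_re, Complex.exp_im]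
  rw [h, Complex.norm_def, Complex.normSq_mk]
  have hc : 1 - t ^ 2 / 2 ≤ Real.cos t := Real.one_sub_sq_div_two_le_cos
  have hs : Real.sin t ^ 2 = 1 - Real.cos t ^ 2 := by
    have := Real.sin_sq_add_cos_sq t; linarith
  have hle : (Real.cos t - 1) * (Real.cos t - 1) + Real.sin t * Real.sin t ≤ t ^ 2 := by
    have hp := Real.sin_sq_add_cos_sq t
    have heq : (Real.cos t - 1) * (Real.cos t - 1) + Real.sin t * Real.sin t
        = 2 - 2 * Real.cos t := by linear_combination hp
    rw [heq]; linarith only [hc]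
  calc Real.sqrt ((Real.cos t - 1) * (Real.cos t - 1) + Real.sin t * Real.sin t)
      ≤ Real.sqrt (t ^ 2) := Real.sqrt_le_sqrt hle
    _ = |t| := Real.sqrt_sq_eq_abs t


set_option maxHeartbeats 4000000 in
theorem stmt_6 (N α ε : ℝ) (hN : 0 < N) (hα : 0 < α) (hε0 : 0 < ε) (hε1 : ε ≤ 1)
    (φ : ℝ × ℝ → ℝ → ℝ) (C : ℕ → ℝ)
    (hsmooth : ∀ x ∈ Set.Icc (0:ℝ) 1 ×ˢ Set.Icc (0:ℝ) 1, ContDiff ℝ 3 (φ x))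
    (hC : ∀ k ≤ 3, ∀ x ∈ Set.Icc (0:ℝ) 1 ×ˢ Set.Icc (0:ℝ) 1, ∀ θ : ℝ,
      2 * Real.pi * |iteratedDeriv k (φ x) θ| ≤ C k)
    (hD2 : 0 < C 0 + C 2)
    (hNbig : α ^ 6 * (C 1 + C 3) ^ 2 / (18 * ε ^ 2) ≤ N)
    (hadm : α ≤ Real.sqrt (Real.sqrt 2 / (Real.exp 1 * (C 0 + C 2)))) :
    ∃ r : ℕ,
      (r : ℝ) ≤ 1 + Real.log (4 / ε) /
        Real.log (2 * Real.sqrt 2 / (Real.exp 1 * α ^ 2 * (C 0 + C 2))) ∧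
      ∃ (c : Fin r → ℝ × ℝ → ℂ) (d : Fin r → ℝ × ℝ → ℂ),
        ∀ x ∈ Set.Icc (0:ℝ) 1 ×ˢ Set.Icc (0:ℝ) 1, ∀ p : ℝ × ℝ,
          0 < p.1 → p.1 ≤ Real.sqrt 2 / 2 * N → |p.2| ≤ α / Real.sqrt N →
          ‖Complex.exp (2 * (Real.pi : ℂ) * Complex.I *
              ((p.1 * (φ x p.2 - Real.cos p.2 * φ x 0 - Real.sin p.2 * deriv (φ x) 0) : ℝ) : ℂ)) -
            ∑ n, c n x * d n p‖ ≤ ε := by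
  have hπ : 0 < Real.pi := Real.pi_pos
  have hs2 : Real.sqrt 2 * Real.sqrt 2 = 2 := Real.mul_self_sqrt (by norm_num)
  have hs2pos : 0 < Real.sqrt 2 := Real.sqrt_pos.mpr (by norm_num)
  have hepos : (0:ℝ) < Real.exp 1 := Real.exp_pos 1
  have he1 : (1:ℝ) ≤ Real.exp 1 := by
    have := Real.add_one_le_exp (1:ℝ); linarith
  set A : ℝ := 2 * Real.sqrt 2 / (Real.exp 1 * α ^ 2 * (C 0 + C 2)) with hA
  have hα2 : α ^ 2 ≤ Real.sqrt 2 / (Real.exp 1 * (C 0 + C 2)) := by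
    have hq : (0:ℝ) ≤ Real.sqrt 2 / (Real.exp 1 * (C 0 + C 2)) := by positivity
    have := pow_le_pow_left₀ hα.le hadm 2
    rwa [Real.sq_sqrt hq] at this
  have hden : 0 < Real.exp 1 * α ^ 2 * (C 0 + C 2) := by positivity
  have hA2 : 2 ≤ A := by
    rw [hA, le_div_iff₀ hden]
    have : Real.exp 1 * α ^ 2 * (C 0 + C 2) ≤ Real.sqrt 2 := by
      rw [le_div_iff₀ (by positivity : (0:ℝ) < Real.exp 1 * (C 0 + C 2))] at hα2
      calc Real.exp 1 * α ^ 2 * (C 0 + C 2) = α ^ 2 * (Real.exp 1 * (C 0 + C 2)) := by ring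
        _ ≤ Real.sqrt 2 := hα2
    linarith
  have hApos : 0 < A := by linarith
  set L2 : ℝ := Real.log A with hL2def
  set L1 : ℝ := Real.log (4 / ε) with hL1def
  have hL2 : 0 < L2 := Real.log_pos (by linarith)
  have h4ε : (4:ℝ) ≤ 4 / ε := by
    rw [le_div_iff₀ hε0]; linarith only [hε1]
  have hL1 : 0 < L1 := Real.log_pos (by linarith)
  set r : ℕ := ⌈L1 / L2⌉₊ with hrdef
  have hrpos : 0 < r := Nat.ceil_pos.mpr (div_pos hL1 hL2)
  have hrle : (r : ℝ) ≤ 1 + L1 / L2 := by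
    have := Nat.ceil_lt_add_one (le_of_lt (div_pos hL1 hL2))
    rw [hrdef]; push_cast; linarith
  have hAr : 4 / ε ≤ A ^ r := by
    have h1 : L1 ≤ (r : ℝ) * L2 := by
      have := Nat.le_ceil (L1 / L2)
      calc L1 = L1 / L2 * L2 := by field_simp
        _ ≤ (r : ℝ) * L2 := by
            apply mul_le_mul_of_nonneg_right _ hL2.le
            rw [hrdef]; exact this
    have h2 : Real.log (4 / ε) ≤ Real.log (A ^ r) := by
      rw [Real.log_pow]; exact h1
    exact (Real.log_le_log_iff (by linarith) (by positivity)).mp h2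
  have hinvAr : (1 / A) ^ r ≤ ε / 4 := by
    rw [div_pow, one_pow, div_le_div_iff₀ (by positivity) (by norm_num)]
    rw [div_le_iff₀ hε0] at hAr
    linarith only [hAr]
  -- M0
  set M0 : ℝ := Real.sqrt 2 * α ^ 2 * (C 0 + C 2) / 4 with hM0def
  have hM0pos : 0 < M0 := by positivity
  have hM0A : M0 * A = 1 / Real.exp 1 := by
    rw [hM0def, hA, div_mul_div_comm, div_eq_div_iff (by positivity) hepos.ne']
    linear_combination (2 * Real.exp 1 * α ^ 2 * (C 0 + C 2)) * hs2
  have hM0le : M0 ≤ 1 / A := by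
    rw [le_div_iff₀ hApos, hM0A]
    rw [div_le_one hepos]; exact he1
  have hM0le1 : M0 ≤ 1 := by
    have : 1 / A ≤ 1 := by rw [div_le_one hApos]; linarith
    linarith
  clear_value A L2 L1 M0 r
  -- the functions
  set F : ℝ × ℝ → ℝ := fun x => φ x 0 + deriv (deriv (φ x)) 0 with hFdef
  refine ⟨r, hrle, 
    fun n x => (2 * (Real.pi : ℂ) * Complex.I * (F x : ℂ)) ^ (n : ℕ) / (Nat.factorial n),
    fun n p => (((1 - Real.cos p.2) * p.1 : ℝ) : ℂ) ^ (n : ℕ), ?_⟩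
  intro x hx p hp1 hp2 hp3
  have hfC : ContDiff ℝ 3 (φ x) := hsmooth x hx
  have hsN : 0 < Real.sqrt N := Real.sqrt_pos.mpr hN
  have hsN2 : Real.sqrt N ^ 2 = N := Real.sq_sqrt hN.le
  have hC1nn : 0 ≤ C 1 := le_trans (by positivity) (hC 1 (by norm_num) x hx 0)
  have hC3nn : 0 ≤ C 3 := le_trans (by positivity) (hC 3 le_rfl x hx 0)
  set L : ℝ := (C 1 + C 3) / (2 * Real.pi) with hLdef
  have hLnn : 0 ≤ L := by positivity
  have hit1 : iteratedDeriv 1 (φ x) = deriv (φ x) := iteratedDeriv_one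
  have hit2 : iteratedDeriv 2 (φ x) = deriv (deriv (φ x)) := by
    rw [show (2:ℕ) = 1+1 from rfl, iteratedDeriv_succ, iteratedDeriv_one]
  have hit3 : iteratedDeriv 3 (φ x) = deriv (deriv (deriv (φ x))) := by
    rw [show (3:ℕ) = 2+1 from rfl, iteratedDeriv_succ, hit2]
  have hLbound : ∀ s, |deriv (φ x) s + deriv (deriv (deriv (φ x))) s| ≤ L := by
    intro s
    have h1 := hC 1 (by norm_num) x hx s
    have h3 := hC 3 le_rfl x hx s
    rw [hit1] at h1; rw [hit3] at h3
    rw [hLdef, le_div_iff₀ (by positivity)]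
    have habs := abs_add_le (deriv (φ x) s) (deriv (deriv (deriv (φ x))) s)
    have hmul := mul_le_mul_of_nonneg_right habs (by positivity : (0:ℝ) ≤ 2 * Real.pi)
    linarith only [hmul, h1, h3]
  have key := lemA (φ x) hfC L hLbound p.2
  have hFb : |F x| ≤ (C 0 + C 2) / (2 * Real.pi) := by
    have h0 := hC 0 (by norm_num) x hx 0
    have h2 := hC 2 (by norm_num) x hx 0
    rw [iteratedDeriv_zero] at h0
    rw [hit2] at h2
    rw [le_div_iff₀ (by positivity)]
    have habs : |F x| ≤ |φ x 0| + |deriv (deriv (φ x)) 0| := by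
      rw [hFdef]; exact abs_add_le _ _
    have hmul := mul_le_mul_of_nonneg_right habs (by positivity : (0:ℝ) ≤ 2 * Real.pi)
    linarith only [hmul, h0, h2]
  set g : ℝ := φ x p.2 - Real.cos p.2 * φ x 0 - Real.sin p.2 * deriv (φ x) 0 with hgdef
  set u : ℝ := 2 * Real.pi * ((1 - Real.cos p.2) * p.1) * F x with hudef
  set z : ℝ := 2 * Real.pi * (p.1 * g) with hzdef
  have hker : Complex.exp (2 * (Real.pi : ℂ) * Complex.I * ((p.1 * g : ℝ) : ℂ))
      = Complex.exp ((z : ℂ) * Complex.I) := by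
    congr 1
    rw [hzdef]
    push_cast
    ring
  have hterm : ∀ m : ℕ, (2 * (Real.pi : ℂ) * Complex.I * (F x : ℂ)) ^ m / (Nat.factorial m)
      * (((1 - Real.cos p.2) * p.1 : ℝ) : ℂ) ^ m = ((u : ℂ) * Complex.I) ^ m / (Nat.factorial m) := by
    intro m
    rw [div_mul_eq_mul_div, ← mul_pow]
    congr 2
    rw [hudef]
    push_cast
    ring
  have hsum : (∑ n : Fin r, (2 * (Real.pi : ℂ) * Complex.I * (F x : ℂ)) ^ (n : ℕ) / (Nat.factorial n)
      * (((1 - Real.cos p.2) * p.1 : ℝ) : ℂ) ^ (n : ℕ))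
      = ∑ m ∈ Finset.range r, ((u : ℂ) * Complex.I) ^ m / (Nat.factorial m) := by
    rw [Fin.sum_univ_eq_sum_range (fun m => (2 * (Real.pi : ℂ) * Complex.I * (F x : ℂ)) ^ m / (Nat.factorial m)
      * (((1 - Real.cos p.2) * p.1 : ℝ) : ℂ) ^ m) r]
    exact Finset.sum_congr rfl fun m _ => hterm m
  have habsu : ‖(u : ℂ) * Complex.I‖ = |u| := by
    rw [norm_mul, Complex.norm_I, Complex.norm_real, Real.norm_eq_abs, mul_one]
  -- bound |u| ≤ M0
  have hcos1 : Real.cos p.2 ≤ 1 := Real.cos_le_one p.2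
  have e1 : 0 ≤ 1 - Real.cos p.2 := by linarith
  have hθ2 : p.2 ^ 2 ≤ α ^ 2 / N := by
    have h := mul_self_le_mul_self (abs_nonneg p.2) hp3
    rw [abs_mul_abs_self] at h
    calc p.2 ^ 2 = p.2 * p.2 := sq p.2
      _ ≤ α / Real.sqrt N * (α / Real.sqrt N) := h
      _ = α ^ 2 / N := by rw [div_mul_div_comm, ← sq, ← sq, hsN2]
  have e2 : 1 - Real.cos p.2 ≤ α ^ 2 / (2 * N) := by
    have := Real.one_sub_sq_div_two_le_cos (x := p.2)
    have h2 : α ^ 2 / (2 * N) = α ^ 2 / N / 2 := by ring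
    linarith
  have hu_le : |u| ≤ M0 := by
    have habs : |u| = 2 * Real.pi * ((1 - Real.cos p.2) * p.1) * |F x| := by
      rw [hudef, abs_mul, abs_of_nonneg (mul_nonneg (by positivity : (0:ℝ) ≤ 2 * Real.pi)
        (mul_nonneg e1 hp1.le))]
    have hstep : 2 * Real.pi * ((1 - Real.cos p.2) * p.1) * |F x|
        ≤ 2 * Real.pi * ((α ^ 2 / (2 * N)) * (Real.sqrt 2 / 2 * N)) * ((C 0 + C 2) / (2 * Real.pi)) := by
      gcongr
    have hM0eq : 2 * Real.pi * ((α ^ 2 / (2 * N)) * (Real.sqrt 2 / 2 * N)) * ((C 0 + C 2) / (2 * Real.pi))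
        = M0 := by
      rw [hM0def]; field_simp; ring
    rw [habs]
    rw [hM0eq] at hstep
    exact hstep
  -- bound |z - u| ≤ ε/2
  have hz_u : |z - u| ≤ ε / 2 := by
    have hdiffeq : z - u = 2 * Real.pi * p.1 * (g - (1 - Real.cos p.2) * F x) := by
      rw [hzdef, hudef]; ring
    have h1 : |z - u| ≤ 2 * Real.pi * p.1 * (L * |p.2| ^ 3 / 6) := by
      rw [hdiffeq, abs_mul, abs_of_nonneg (by positivity : (0:ℝ) ≤ 2 * Real.pi * p.1)]
      apply mul_le_mul_of_nonneg_left _ (by positivity)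
      simpa [hgdef, hFdef] using key
    have h2 : 2 * Real.pi * p.1 * (L * |p.2| ^ 3 / 6)
        ≤ 2 * Real.pi * (Real.sqrt 2 / 2 * N) * (L * (α / Real.sqrt N) ^ 3 / 6) := by
      gcongr
    have h3 : 2 * Real.pi * (Real.sqrt 2 / 2 * N) * (L * (α / Real.sqrt N) ^ 3 / 6)
        = Real.sqrt 2 * α ^ 3 * (C 1 + C 3) / (12 * Real.sqrt N) := by
      have hcube : (α / Real.sqrt N) ^ 3 = α ^ 3 / (N * Real.sqrt N) := by
        rw [div_pow, show Real.sqrt N ^ 3 = N * Real.sqrt N from by rw [pow_succ, hsN2]]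
      rw [hLdef, hcube]; field_simp; ring
    have h4 : Real.sqrt 2 * α ^ 3 * (C 1 + C 3) / (12 * Real.sqrt N) ≤ ε / 2 := by
      rw [div_le_div_iff₀ (by positivity) (by norm_num)]
      have h18 : α ^ 6 * (C 1 + C 3) ^ 2 ≤ 18 * ε ^ 2 * N := by
        rw [div_le_iff₀ (by positivity)] at hNbig
        linarith
      have hsq : (Real.sqrt 2 * α ^ 3 * (C 1 + C 3)) ^ 2 ≤ (6 * ε * Real.sqrt N) ^ 2 := by
        have hs2sq : Real.sqrt 2 ^ 2 = 2 := by rw [sq]; exact hs2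
        calc (Real.sqrt 2 * α ^ 3 * (C 1 + C 3)) ^ 2
            = Real.sqrt 2 ^ 2 * (α ^ 6 * (C 1 + C 3) ^ 2) := by ring
          _ = 2 * (α ^ 6 * (C 1 + C 3) ^ 2) := by rw [hs2sq]
          _ ≤ 36 * ε ^ 2 * N := by linarith
          _ = (6 * ε * Real.sqrt N) ^ 2 := by
              have : (6 * ε * Real.sqrt N) ^ 2 = 36 * ε ^ 2 * Real.sqrt N ^ 2 := by ring
              rw [this, hsN2]
      have hab : 0 ≤ 6 * ε * Real.sqrt N := by positivity
      have hcd : 0 ≤ Real.sqrt 2 * α ^ 3 * (C 1 + C 3) := by positivity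
      have hfin : Real.sqrt 2 * α ^ 3 * (C 1 + C 3) ≤ 6 * ε * Real.sqrt N :=
        (pow_le_pow_iff_left₀ hcd hab two_ne_zero).mp hsq
      linarith only [hfin]
    linarith only [h1, h2, h3, h4]
  -- assemble
  clear_value g u z
  rw [hker, hsum]
  have part1 : ‖Complex.exp ((z : ℂ) * Complex.I) - Complex.exp ((u : ℂ) * Complex.I)‖
      ≤ ε / 2 := by
    have hfac : Complex.exp ((z : ℂ) * Complex.I) - Complex.exp ((u : ℂ) * Complex.I)
        = Complex.exp ((u : ℂ) * Complex.I) * (Complex.exp (((z - u : ℝ) : ℂ) * Complex.I) - 1) := by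
      rw [mul_sub, mul_one, ← Complex.exp_add]
      congr 2
      push_cast
      ring
    rw [hfac, norm_mul]
    have habsexp : ‖Complex.exp ((u : ℂ) * Complex.I)‖ = 1 := by
      rw [Complex.norm_exp]
      simp
    rw [habsexp, one_mul]
    exact le_trans (abs_exp_I_sub_one_le (z - u)) hz_u
  have part2 : ‖Complex.exp ((u : ℂ) * Complex.I)
      - ∑ m ∈ Finset.range r, ((u : ℂ) * Complex.I) ^ m / (Nat.factorial m)‖ ≤ ε / 2 := by
    have hxle : ‖(u : ℂ) * Complex.I‖ ≤ 1 := by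
      rw [habsu]; exact le_trans hu_le hM0le1
    have hb := Complex.exp_bound hxle hrpos
    have t1 : ‖(u : ℂ) * Complex.I‖ ^ r ≤ M0 ^ r := by
      apply pow_le_pow_left₀ (norm_nonneg _)
      rw [habsu]; exact hu_le
    have hrfpos : (0:ℝ) < (Nat.factorial r : ℝ) * r := by
      have := Nat.factorial_pos r
      positivity
    have t2 : ((Nat.succ r : ℕ) : ℝ) * (((Nat.factorial r : ℝ) * r)⁻¹) ≤ 2 := by
      rw [inv_eq_one_div, mul_one_div, div_le_iff₀ hrfpos]
      have hr1 : (1:ℝ) ≤ (r:ℝ) := by exact_mod_cast hrpos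
      have hf1 : (1:ℝ) ≤ (Nat.factorial r : ℝ) := by
        exact_mod_cast Nat.one_le_iff_ne_zero.mpr (Nat.factorial_pos r).ne'
      push_cast
      have hmul := mul_le_mul_of_nonneg_right hf1 (by positivity : (0:ℝ) ≤ (r:ℝ))
      linarith only [hmul, hr1]
    have t3 : M0 ^ r ≤ ε / 4 := le_trans (pow_le_pow_left₀ hM0pos.le hM0le r) hinvAr
    calc ‖Complex.exp ((u : ℂ) * Complex.I)
          - ∑ m ∈ Finset.range r, ((u : ℂ) * Complex.I) ^ m / (Nat.factorial m)‖
        ≤ ‖(u : ℂ) * Complex.I‖ ^ r * ((Nat.succ r : ℕ) * ((Nat.factorial r : ℝ) * r)⁻¹) := hb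
      _ ≤ M0 ^ r * 2 := by
          apply mul_le_mul t1 t2 _ (by positivity)
          positivity
      _ ≤ ε / 4 * 2 := by linarith only [t3]
      _ = ε / 2 := by ring
  calc ‖Complex.exp ((z : ℂ) * Complex.I)
        - ∑ m ∈ Finset.range r, ((u : ℂ) * Complex.I) ^ m / (Nat.factorial m)‖
      ≤ ‖Complex.exp ((z : ℂ) * Complex.I) - Complex.exp ((u : ℂ) * Complex.I)‖
        + ‖Complex.exp ((u : ℂ) * Complex.I)
          - ∑ m ∈ Finset.range r, ((u : ℂ) * Complex.I) ^ m / (Nat.factorial m)‖ := by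
        have := norm_add_le (Complex.exp ((z : ℂ) * Complex.I) - Complex.exp ((u : ℂ) * Complex.I))
          (Complex.exp ((u : ℂ) * Complex.I)
            - ∑ m ∈ Finset.range r, ((u : ℂ) * Complex.I) ^ m / (Nat.factorial m))
        rwa [sub_add_sub_cancel] at this
    _ ≤ ε / 2 + ε / 2 := add_le_add part1 part2
    _ = ε := by ring
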